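/- Let G be a finitely generated group and H a subgroup of finite index in G. Let X be a finite monoid generating set for G and Y a finite monoid generating set for H. Then there is a rational transduction σ ⊆ Y* × X* such that W_X(G) = W_Y(H)σ, i.e., the word problem of G with respect to X is the image of the word problem of H with respect to Y under σ. -/
import Mathlib


/-!
Common definitions: finite automata over a free monoid and over a product of free
monoids (transducers), RID languages, canonical surjections from free monoids
(finite generating sets), the rational subset problem, and monadic rewriting systems.
-/

namespace RSP

/-- A finite (nondeterministic) automaton over alphabet `α`, with states indexed by
natural numbers, given by a finite list of labelled edges, an initial vertex and a
list of terminal vertices. -/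
structure NA (α : Type) where
  trans : List (ℕ × α × ℕ)
  start : ℕ
  accept : List ℕ

namespace NA

variable {α : Type}

/-- `P.Reach p w q` : the word `w` labels a path from `p` to `q` in `P`. -/
inductive Reach (P : NA α) : ℕ → List α → ℕ → Prop
  | refl (p : ℕ) : Reach P p [] p
  | step {p : ℕ} {a : α} {q : ℕ} {w : List α} {r : ℕ} :
      (p, a, q) ∈ P.trans → Reach P q w r → Reach P p (a :: w) r

/-- The language recognised by a finite automaton: all words labelling a path from
the initial vertex to some terminal vertex.  (The regular languages over `α` are
exactly the languages of this form.) -/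
def lang (P : NA α) : Set (List α) :=
  {w | ∃ q ∈ P.accept, P.Reach P.start w q}

/-- Automata are plain finite data, hence effectively encodable. -/
def equivRepr (α : Type) : NA α ≃ List (ℕ × α × ℕ) × ℕ × List ℕ where
  toFun P := (P.trans, P.start, P.accept)
  invFun x := ⟨x.1, x.2.1, x.2.2⟩
  left_inv := fun ⟨_, _, _⟩ => rfl
  right_inv := fun ⟨_, _, _⟩ => rfl

instance [Primcodable α] : Primcodable (NA α) :=
  Primcodable.ofEquiv _ (equivRepr α)

end NA

/-- A language `L ⊆ α*` is RID (regular intersection decidable) if there is an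
algorithm which, given a finite automaton over `α`, decides whether the regular
language it recognises has non-empty intersection with `L`. -/
def RID {α : Type} [Primcodable α] (L : Set (List α)) : Prop :=
  ∃ f : NA α → Bool, Computable f ∧ ∀ P : NA α, (f P = true ↔ (P.lang ∩ L).Nonempty)

/-- `π : A* → M` is a canonical surjection extending a generating set of `M`:
a surjective monoid homomorphism from the free monoid `List A` onto `M`. -/
structure IsWordMap {A M : Type} [Monoid M] (π : List A → M) : Prop where
  map_nil : π [] = 1
  map_append : ∀ u v : List A, π (u ++ v) = π u * π v
  surjective : Function.Surjective π

/-- The monoid `M` has decidable rational subset problem with respect to the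
canonical surjection `π : A* → M`: there is an algorithm which, given a finite
automaton `P` over `A` and a word `w ∈ A*`, decides whether `π w` belongs to the
rational subset `π(L(P))` of `M`. -/
def IsRatSubsetDecidable {A M : Type} [Monoid M] [Primcodable A] (π : List A → M) : Prop :=
  ∃ f : NA A × List A → Bool, Computable f ∧
    ∀ (P : NA A) (w : List A), (f (P, w) = true ↔ π w ∈ π '' P.lang)

/-- A finitely generated monoid `M` has decidable rational subset problem: for some
(equivalently, by change of generators, any) canonical surjection `π : A* → M` from
a free monoid on a finite alphabet, membership in rational subsets of `M` is
decidable.  Finite alphabets are taken to be `Fin n` without loss of generality. -/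
def HasDecRSP (M : Type) [Monoid M] : Prop :=
  ∃ (n : ℕ) (π : List (Fin n) → M), IsWordMap π ∧ IsRatSubsetDecidable π

/-- A finite automaton over a product of free monoids `A* × B*`: edges are labelled
by pairs of words. -/
structure NA2 (α β : Type) where
  trans : List (ℕ × (List α × List β) × ℕ)
  start : ℕ
  accept : List ℕ

namespace NA2

variable {α β : Type}

/-- `T.Reach p u v q` : some path from `p` to `q` has concatenated label `(u, v)`. -/
inductive Reach (T : NA2 α β) : ℕ → List α → List β → ℕ → Prop
  | refl (p : ℕ) : Reach T p [] [] p
  | step {p : ℕ} {u : List α} {v : List β} {q : ℕ} {u' : List α} {v' : List β} {r : ℕ} :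
      (p, (u, v), q) ∈ T.trans → Reach T q u' v' r → Reach T p (u ++ u') (v ++ v') r

/-- The rational subset of `A* × B*` recognised by the automaton. -/
def rel (T : NA2 α β) : Set (List α × List β) :=
  {x | ∃ q ∈ T.accept, T.Reach T.start x.1 x.2 q}

def equivRepr (α β : Type) : NA2 α β ≃ List (ℕ × (List α × List β) × ℕ) × ℕ × List ℕ where
  toFun T := (T.trans, T.start, T.accept)
  invFun x := ⟨x.1, x.2.1, x.2.2⟩
  left_inv := fun ⟨_, _, _⟩ => rfl
  right_inv := fun ⟨_, _, _⟩ => rfl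

instance [Primcodable α] [Primcodable β] : Primcodable (NA2 α β) :=
  Primcodable.ofEquiv _ (equivRepr α β)

end NA2

/-- A rational transduction `σ ⊆ A* × B*` is a rational subset of the product
monoid `A* × B*`: the set recognised by some finite automaton whose edges are
labelled by pairs of words. -/
def IsRatTransduction {α β : Type} (σ : Set (List α × List β)) : Prop :=
  ∃ T : NA2 α β, σ = T.rel

/-- A set of rewriting rules `Γ ⊆ Σ* × Σ*` is monadic if every right-hand side is
a single letter or the empty word. -/
def IsMonadic {α : Type} (Γ : Set (List α × List α)) : Prop :=
  ∀ p ∈ Γ, p.2.length ≤ 1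

/-- One rewriting step: `u ⇒ v` iff `u = rws` and `v = rxs` for some rule
`(w → x) ∈ Γ`. -/
def Step {α : Type} (Γ : Set (List α × List α)) (u v : List α) : Prop :=
  ∃ (r s w x : List α), (w, x) ∈ Γ ∧ u = r ++ w ++ s ∧ v = r ++ x ++ s

/-- The set `LΓ` of descendants of `L` under `Γ` (under `⇒*`). -/
def descendants {α : Type} (Γ : Set (List α × List α)) (L : Set (List α)) : Set (List α) :=
  {v | ∃ u ∈ L, Relation.ReflTransGen (Step Γ) u v}

/-- The set `LΓ⁻¹` of ancestors of `L` under `Γ` (under `⇒*`). -/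
def ancestors {α : Type} (Γ : Set (List α × List α)) (L : Set (List α)) : Set (List α) :=
  {u | ∃ v ∈ L, Relation.ReflTransGen (Step Γ) u v}

/-- `Γ_x` : the set of left-hand sides of rules of `Γ` with right-hand side `x`. -/
def ruleSet {α : Type} (Γ : Set (List α × List α)) (x : List α) : Set (List α) :=
  {w | (w, x) ∈ Γ}

/-- `Γ` is an RID monadic rewriting system: it is monadic and each language `Γ_x`
(for `x ∈ Σ ∪ {ε}`, i.e. `x` a word of length at most one) is RID. -/
def IsRIDSystem {α : Type} [Primcodable α] (Γ : Set (List α × List α)) : Prop :=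
  IsMonadic Γ ∧ ∀ x : List α, x.length ≤ 1 → RID (ruleSet Γ x)

end RSP

namespace RSP

/-- Let `G` be a finitely generated group and `H` a subgroup of
finite index, with finite monoid generating sets `X` of `G` and `Y` of `H` (via
canonical surjections `πX : X* → G` and `πY : Y* → H`).  Then there is a rational
transduction `σ ⊆ Y* × X*` with `W_X(G) = W_Y(H)σ`. -/
theorem wordProblem_transduction_of_finiteIndex {G : Type} [Group G] (H : Subgroup G)
    [H.FiniteIndex] {X Y : Type} [Fintype X] [Fintype Y]
    (πX : List X → G) (hX : IsWordMap πX) (πY : List Y → H) (hY : IsWordMap πY) :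
    ∃ T : NA2 Y X,
      {v : List X | πX v = 1} = {v : List X | ∃ u : List Y, πY u = 1 ∧ (u, v) ∈ T.rel} := by
  classical
  haveI : Fintype (G ⧸ H) := Fintype.ofFinite _
  set n := Fintype.card (G ⧸ H) with hn
  let e : G ⧸ H ≃ Fin n := Fintype.equivFin _
  let out : G ⧸ H → G := fun c => Quotient.out c
  have hout : ∀ c, QuotientGroup.mk (out c) = c := fun c => QuotientGroup.out_eq' c
  let f : G ⧸ H → X → G ⧸ H := fun c x => QuotientGroup.mk ((πX [x])⁻¹ * out c)
  have hf : ∀ (g : G) (x : X),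
      f (QuotientGroup.mk g) x = QuotientGroup.mk ((πX [x])⁻¹ * g) := by
    intro g x
    show QuotientGroup.mk ((πX [x])⁻¹ * out (QuotientGroup.mk g)) = _
    rw [QuotientGroup.eq]
    have : QuotientGroup.mk (out (QuotientGroup.mk g)) = QuotientGroup.mk g := hout _
    have h1 : (out (QuotientGroup.mk g))⁻¹ * g ∈ H := (QuotientGroup.eq).mp this
    simpa [mul_assoc] using h1
  have hmem : ∀ c x, (out c)⁻¹ * πX [x] * out (f c x) ∈ H := by
    intro c x
    have : QuotientGroup.mk (out (f c x)) = QuotientGroup.mk ((πX [x])⁻¹ * out c) := hout _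
    have h1 : (out (f c x))⁻¹ * ((πX [x])⁻¹ * out c) ∈ H := (QuotientGroup.eq).mp this
    have h2 := H.inv_mem h1
    simpa [mul_assoc] using h2
  choose w hw using fun (c : G ⧸ H) (x : X) => hY.surjective ⟨_, hmem c x⟩
  have hwG : ∀ c x, ((πY (w c x) : H) : G) = (out c)⁻¹ * πX [x] * out (f c x) := by
    intro c x; rw [hw c x]
  let c1 : G ⧸ H := QuotientGroup.mk 1
  let T : NA2 Y X :=
    { trans := (Finset.univ : Finset ((G ⧸ H) × X)).toList.map
        (fun p => (((e p.1 : Fin n) : ℕ), (w p.1 p.2, [p.2]), ((e (f p.1 p.2) : Fin n) : ℕ)))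
      start := ((e c1 : Fin n) : ℕ)
      accept := [((e c1 : Fin n) : ℕ)] }
  have einj : ∀ c c' : G ⧸ H, ((e c : Fin n) : ℕ) = ((e c' : Fin n) : ℕ) → c = c' := by
    intro c c' h
    exact e.injective (Fin.val_injective h)
  let s : G ⧸ H → List X → G ⧸ H := fun c v => v.foldl f c
  have hs_nil : ∀ c, s c [] = c := fun _ => rfl
  have hs_cons : ∀ c x v, s c (x :: v) = s (f c x) v := fun _ _ _ => rfl
  have hs : ∀ (v : List X) (g : G), s (QuotientGroup.mk g) v = QuotientGroup.mk ((πX v)⁻¹ * g) := by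
    intro v
    induction v with
    | nil => intro g; simp [hs_nil, hX.map_nil]
    | cons x v ih =>
      intro g
      rw [hs_cons, hf, ih]
      congr 1
      have : πX (x :: v) = πX [x] * πX v := by
        have := hX.map_append [x] v; simpa using this
      rw [this, mul_inv_rev, mul_assoc]
  -- forward reachability
  have fwd : ∀ (v : List X) (c : G ⧸ H), ∃ u : List Y,
      T.Reach ((e c : Fin n) : ℕ) u v ((e (s c v) : Fin n) : ℕ) ∧
      ((πY u : H) : G) = (out c)⁻¹ * πX v * out (s c v) := by
    intro v
    induction v with
    | nil =>
      intro c
      exact ⟨[], NA2.Reach.refl _, by simp [hY.map_nil, hX.map_nil, hs_nil]⟩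
    | cons x v ih =>
      intro c
      obtain ⟨u1, hr1, hp1⟩ := ih (f c x)
      refine ⟨w c x ++ u1, ?_, ?_⟩
      · have hmemT : (((e c : Fin n) : ℕ), (w c x, [x]), ((e (f c x) : Fin n) : ℕ)) ∈ T.trans := by
          simp only [T, List.mem_map, Finset.mem_toList]
          exact ⟨(c, x), Finset.mem_univ _, rfl⟩
        have := NA2.Reach.step hmemT hr1
        simpa [hs_cons] using this
      · have : πY (w c x ++ u1) = πY (w c x) * πY u1 := hY.map_append _ _
        rw [this]
        push_cast
        rw [hwG, hp1, hs_cons]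
        have hx : πX (x :: v) = πX [x] * πX v := by
          have := hX.map_append [x] v; simpa using this
        rw [hx]
        group
  -- backward
  have bwd : ∀ (p : ℕ) (u : List Y) (v : List X) (q : ℕ), T.Reach p u v q →
      ∀ c : G ⧸ H, p = ((e c : Fin n) : ℕ) →
        q = ((e (s c v) : Fin n) : ℕ) ∧ ((πY u : H) : G) = (out c)⁻¹ * πX v * out (s c v) := by
    intro p u v q hr
    induction hr with
    | refl p => intro c hc; exact ⟨by simp [hs_nil, hc], by simp [hY.map_nil, hX.map_nil, hs_nil]⟩
    | step hmemT hr ih =>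
      rename_i p u0 v0 q u' v' r
      intro c hc
      simp only [T, List.mem_map, Finset.mem_toList] at hmemT
      obtain ⟨⟨c', x⟩, -, heq⟩ := hmemT
      obtain ⟨hp, ⟨hu, hv⟩, hq⟩ :
          ((e c' : Fin n) : ℕ) = p ∧ (w c' x = u0 ∧ [x] = v0) ∧ ((e (f c' x) : Fin n) : ℕ) = q := by
        simpa [Prod.ext_iff] using heq
      have hcc : c' = c := einj _ _ (hp.trans hc)
      subst hcc
      obtain ⟨hq', hp'⟩ := ih (f c' x) hq.symm
      subst hu hv
      have hxv : πX ([x] ++ v') = πX [x] * πX v' := hX.map_append [x] v'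
      constructor
      · rw [hq']; rfl
      · have hsplit : πY (w c' x ++ u') = πY (w c' x) * πY u' := hY.map_append _ _
        rw [hsplit]
        push_cast
        rw [hwG, hp', hxv]
        have : s c' ([x] ++ v') = s (f c' x) v' := by rw [show ([x] ++ v' : List X) = x :: v' from rfl, hs_cons]
        rw [this]
        group
  refine ⟨T, ?_⟩
  ext v
  simp only [Set.mem_setOf_eq]
  constructor
  · intro h1
    obtain ⟨u, hr, hp⟩ := fwd v c1
    have hsv : s c1 v = c1 := by
      show s (QuotientGroup.mk 1) v = QuotientGroup.mk 1
      rw [hs v 1, h1]; simp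
    refine ⟨u, ?_, ((e c1 : Fin n) : ℕ), by simp [T], by rwa [hsv] at hr⟩
    have : ((πY u : H) : G) = 1 := by rw [hp, hsv, h1]; group
    exact_mod_cast this
  · rintro ⟨u, hu1, q, hq, hr⟩
    have hq' : q = ((e c1 : Fin n) : ℕ) := by simpa [T] using hq
    obtain ⟨hq2, hp2⟩ := bwd _ u v q hr c1 rfl
    have hsv : s c1 v = c1 := einj _ _ (hq2.symm.trans hq')
    rw [hsv, hu1] at hp2
    have : (1 : G) = (out c1)⁻¹ * πX v * out c1 := by simpa using hp2
    have := congrArg (fun g => out c1 * g * (out c1)⁻¹) this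
    simpa [mul_assoc] using this.symm


end RSP
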